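/- Let P be a Markov kernel on a measurable space E satisfying the mixing condition (A.1) with Λ ∈ (0,1), and let g : E → ℝ be bounded measurable. For every M > 0 there exists α ∈ (0,1), depending only on P and M (in particular not on g), such that for all bounded measurable f₁, f₂ : E → ℝ with ‖f₁‖_sp ≤ M and ‖f₂‖_sp ≤ M one has ‖Tf₁ − Tf₂‖_sp ≤ α · ‖f₁ − f₂‖_sp, i.e. the MPE operator T is a local contraction in the span seminorm. -/

import Mathlib

open MeasureTheory ProbabilityTheory

/-- The span seminorm `‖f‖_sp = (sup f - inf f)/2`. -/
noncomputable def spanSeminorm {E : Type*} (f : E → ℝ) : ℝ :=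
  ((⨆ x, f x) - ⨅ x, f x) / 2

/-- The multiplicative Poisson equation (MPE) operator
`(T f)(x) = g(x) + log ∫ exp (f y) P(x, dy)`. -/
noncomputable def mpeOp {E : Type*} [MeasurableSpace E] (P : Kernel E E) (g : E → ℝ)
    (f : E → ℝ) : E → ℝ :=
  fun x => g x + Real.log (∫ y, Real.exp (f y) ∂(P x))

namespace MpeAux

variable {E : Type*} [MeasurableSpace E]

lemma bddIntegrable (μ : Measure E) [IsFiniteMeasure μ] {f : E → ℝ} (hf : Measurable f)
    {C : ℝ} (hC : ∀ x, |f x| ≤ C) : Integrable f μ :=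
  (integrable_const C).mono' hf.aestronglyMeasurable (Filter.Eventually.of_forall hC)

lemma exp_int_pos (μ : Measure E) [IsProbabilityMeasure μ] {f : E → ℝ}
    (hf : Measurable f) {C : ℝ} (hC : ∀ y, |f y| ≤ C) :
    Real.exp (-C) ≤ ∫ y, Real.exp (f y) ∂μ := by
  have h1 : ∀ y, Real.exp (-C) ≤ Real.exp (f y) :=
    fun y => Real.exp_le_exp.2 (neg_le_of_abs_le (hC y))
  have h2 : ∀ y, |Real.exp (f y)| ≤ Real.exp C := fun y => by
    rw [abs_of_nonneg (Real.exp_pos _).le]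
    exact Real.exp_le_exp.2 (le_of_abs_le (hC y))
  calc Real.exp (-C) = ∫ _, Real.exp (-C) ∂μ := by simp
    _ ≤ ∫ y, Real.exp (f y) ∂μ :=
        integral_mono (integrable_const _) (bddIntegrable μ hf.exp h2)
          (fun y => h1 y)

lemma abs_exp_le {f : E → ℝ} {C : ℝ} (hC : ∀ y, |f y| ≤ C) :
    ∀ y, |Real.exp (f y)| ≤ Real.exp C := fun y => by
  rw [abs_of_nonneg (Real.exp_pos _).le]
  exact Real.exp_le_exp.2 (le_of_abs_le (hC y))

/-- Total-variation type comparison of integrals. -/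
lemma tv_integral_diff (μ μ' : Measure E) [IsProbabilityMeasure μ] [IsProbabilityMeasure μ']
    {Λ : ℝ} (hΛ : 0 ≤ Λ)
    (hmix : ∀ B : Set E, MeasurableSet B → (μ B).toReal - (μ' B).toReal ≤ Λ)
    {h : E → ℝ} (hh : Measurable h) {a b : ℝ}
    (ha : ∀ y, a ≤ h y) (hb : ∀ y, h y ≤ b) [Nonempty E] :
    ∫ y, h y ∂μ - ∫ y, h y ∂μ' ≤ Λ * (b - a) := by
  have hab : a ≤ b := le_trans (ha (Classical.arbitrary E)) (hb (Classical.arbitrary E))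
  set k : E → ℝ := fun y => h y - a with hk
  have hkm : Measurable k := hh.sub measurable_const
  have hkb : ∀ y, |k y| ≤ b - a := fun y => by
    rw [abs_le]; refine ⟨by simp only [hk]; linarith [ha y], by simp only [hk]; linarith [hb y]⟩
  have hknn : ∀ y, 0 ≤ k y := fun y => by simp only [hk]; linarith [ha y]
  have hhb : ∀ y, |h y| ≤ max |a| |b| := fun y => abs_le.2
    ⟨le_trans (neg_le_neg (le_max_left _ _)) (by linarith [ha y, neg_abs_le a]),
     le_trans (hb y) (le_trans (le_abs_self b) (le_max_right _ _))⟩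
  have hintk : ∀ (ν : Measure E) [IsProbabilityMeasure ν], Integrable k ν :=
    fun ν _ => bddIntegrable ν hkm hkb
  have key : ∀ (ν : Measure E) [IsProbabilityMeasure ν],
      ∫ y, h y ∂ν = a + ∫ t in Set.Ioi (0:ℝ), (ν {y | t < k y}).toReal := by
    intro ν _
    simp only [← measureReal_def]
    rw [← Integrable.integral_eq_integral_meas_lt (hintk ν) (Filter.Eventually.of_forall hknn)]
    have : ∫ y, k y ∂ν = ∫ y, h y ∂ν - ∫ y, (a:ℝ) ∂ν :=
      integral_sub (bddIntegrable ν hh hhb) (integrable_const a)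
    rw [this]; simp
  have tailMeas : ∀ (ν : Measure E), Measurable (fun t : ℝ => (ν {y | t < k y}).toReal) := by
    intro ν
    have anti : Antitone (fun t : ℝ => ν {y | t < k y}) :=
      fun s t hst => measure_mono (fun y hy => lt_of_le_of_lt hst hy)
    exact anti.measurable.ennreal_toReal
  have tailLe1 : ∀ (ν : Measure E) [IsProbabilityMeasure ν] (t : ℝ),
      (ν {y | t < k y}).toReal ≤ 1 := by
    intro ν _ t
    have := measure_mono (μ := ν) (Set.subset_univ {y | t < k y})
    calc (ν {y | t < k y}).toReal ≤ (ν Set.univ).toReal :=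
          ENNReal.toReal_mono (by simp) this
      _ = 1 := by simp
  have tailZero : ∀ (ν : Measure E) (t : ℝ), b - a ≤ t → (ν {y | t < k y}).toReal = 0 := by
    intro ν t ht
    have : {y | t < k y} = ∅ := by
      ext y; simp only [Set.mem_setOf_eq, Set.mem_empty_iff_false, iff_false, not_lt]
      exact le_trans (abs_le.1 (hkb y)).2 ht
    rw [this]; simp
  have tailInt : ∀ (ν : Measure E) [IsProbabilityMeasure ν],
      IntegrableOn (fun t : ℝ => (ν {y | t < k y}).toReal) (Set.Ioi 0) := by
    intro ν _
    refine Integrable.mono' (g := fun t => Set.indicator (Set.Ioc 0 (b-a)) (fun _ => (1:ℝ)) t)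
      ?_ (tailMeas ν).aestronglyMeasurable ?_
    · exact (integrable_indicator_iff measurableSet_Ioc).2
        (integrableOn_const (by simp [measure_Ioc_lt_top]))
    · refine (ae_restrict_iff' measurableSet_Ioi).2 (Filter.Eventually.of_forall ?_)
      intro t ht
      rw [Real.norm_eq_abs, abs_of_nonneg ENNReal.toReal_nonneg]
      by_cases h' : t ≤ b - a
      · rw [Set.indicator_of_mem (Set.mem_Ioc.2 ⟨ht, h'⟩)]; exact tailLe1 ν t
      · rw [tailZero ν t (le_of_not_ge h')]
        exact Set.indicator_nonneg (by intros; norm_num) t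
  rw [key μ, key μ']
  have split : a + (∫ t in Set.Ioi (0:ℝ), (μ {y | t < k y}).toReal)
      - (a + ∫ t in Set.Ioi (0:ℝ), (μ' {y | t < k y}).toReal)
      = ∫ t in Set.Ioi (0:ℝ), ((μ {y | t < k y}).toReal - (μ' {y | t < k y}).toReal) := by
    rw [integral_sub (tailInt μ) (tailInt μ')]; ring
  rw [split]
  have mono : ∫ t in Set.Ioi (0:ℝ), ((μ {y | t < k y}).toReal - (μ' {y | t < k y}).toReal)
      ≤ ∫ t in Set.Ioi (0:ℝ), Set.indicator (Set.Ioc 0 (b-a)) (fun _ => Λ) t := by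
    refine integral_mono_ae ((tailInt μ).sub (tailInt μ')) ?_ ?_
    · exact (integrable_indicator_iff measurableSet_Ioc).2
        (integrableOn_const (by simp [measure_Ioc_lt_top]))
    · refine (ae_restrict_iff' measurableSet_Ioi).2 (Filter.Eventually.of_forall ?_)
      intro t ht
      dsimp only
      by_cases h' : t ≤ b - a
      · rw [Set.indicator_of_mem (Set.mem_Ioc.2 ⟨ht, h'⟩)]
        exact hmix _ (measurableSet_lt measurable_const hkm)
      · rw [Set.indicator_of_notMem (fun hc => h' (Set.mem_Ioc.1 hc).2),
          tailZero μ t (le_of_not_ge h')]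
        simp [ENNReal.toReal_nonneg]
  refine le_trans mono ?_
  rw [integral_indicator measurableSet_Ioc]
  rw [setIntegral_const]
  have : (volume.restrict (Set.Ioi (0:ℝ))) (Set.Ioc 0 (b-a)) = ENNReal.ofReal (b - a) := by
    rw [Measure.restrict_apply measurableSet_Ioc]
    have : Set.Ioc (0:ℝ) (b-a) ∩ Set.Ioi 0 = Set.Ioc 0 (b-a) := by
      ext t; simp (config := {contextual := true}) [and_assoc]
    rw [this, Real.volume_Ioc, sub_zero]
  rw [measureReal_def, this, ENNReal.toReal_ofReal (by linarith)]
  exact le_of_eq (mul_comm _ _)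

/-- Jensen / gradient inequality for `log ∫ exp`. -/
lemma log_int_exp_grad (μ : Measure E) [IsProbabilityMeasure μ] {f ψ : E → ℝ}
    (hf : Measurable f) (hψ : Measurable ψ) {Cf Cψ : ℝ}
    (hCf : ∀ y, |f y| ≤ Cf) (hCψ : ∀ y, |ψ y| ≤ Cψ) :
    Real.log (∫ y, Real.exp (f y) ∂μ)
      + (∫ y, ψ y * Real.exp (f y) ∂μ) / (∫ y, Real.exp (f y) ∂μ)
      ≤ Real.log (∫ y, Real.exp (f y + ψ y) ∂μ) := by
  set Z := ∫ y, Real.exp (f y) ∂μ with hZ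
  have hZpos : 0 < Z := lt_of_lt_of_le (Real.exp_pos _) (exp_int_pos μ hf hCf)
  have hef : ∀ y, |Real.exp (f y)| ≤ Real.exp Cf := abs_exp_le hCf
  set c := (∫ y, ψ y * Real.exp (f y) ∂μ) / Z with hc
  have hintψef : Integrable (fun y => ψ y * Real.exp (f y)) μ :=
    bddIntegrable μ (hψ.mul hf.exp) (C := Cψ * Real.exp Cf) (fun y => by
      rw [abs_mul]
      exact mul_le_mul (hCψ y) (hef y) (abs_nonneg _) (le_trans (abs_nonneg _) (hCψ y)))
  have hpt : ∀ y, Real.exp c * (Real.exp (f y) + (ψ y - c) * Real.exp (f y))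
      ≤ Real.exp (f y + ψ y) := by
    intro y
    have h1 : (ψ y - c) + 1 ≤ Real.exp (ψ y - c) := Real.add_one_le_exp _
    have h2 : Real.exp (f y + ψ y) = Real.exp (f y) * (Real.exp c * Real.exp (ψ y - c)) := by
      rw [← Real.exp_add, ← Real.exp_add]; ring_nf
    rw [h2]
    have h3 : Real.exp c * ((ψ y - c) + 1) ≤ Real.exp c * Real.exp (ψ y - c) :=
      mul_le_mul_of_nonneg_left h1 (Real.exp_pos _).le
    nlinarith [Real.exp_pos (f y), Real.exp_pos c, Real.exp_pos (ψ y - c),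
      mul_le_mul_of_nonneg_left h3 (Real.exp_pos (f y)).le]
  have hbase : Integrable (fun y => Real.exp (f y)) μ := bddIntegrable μ hf.exp hef
  have hlhs0 : Integrable (fun y => Real.exp (f y) + (ψ y - c) * Real.exp (f y)) μ := by
    refine (hbase.add (hintψef.sub (hbase.const_mul c))).congr
      (Filter.Eventually.of_forall fun y => ?_)
    simp only [Pi.add_apply, Pi.sub_apply]; ring
  have hlhs : Integrable (fun y => Real.exp c * (Real.exp (f y) + (ψ y - c) * Real.exp (f y))) μ :=
    hlhs0.const_mul _
  have hrhs : Integrable (fun y => Real.exp (f y + ψ y)) μ :=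
    bddIntegrable μ (hf.add hψ).exp (C := Real.exp (Cf + Cψ)) (fun y => by
      rw [abs_of_nonneg (Real.exp_pos _).le]
      exact Real.exp_le_exp.2 (add_le_add (le_of_abs_le (hCf y)) (le_of_abs_le (hCψ y))))
  have hint : Real.exp c * Z ≤ ∫ y, Real.exp (f y + ψ y) ∂μ := by
    have := integral_mono hlhs hrhs hpt
    have hexp : ∫ y, Real.exp c * (Real.exp (f y) + (ψ y - c) * Real.exp (f y)) ∂μ
        = Real.exp c * (Z + ((∫ y, ψ y * Real.exp (f y) ∂μ) - c * Z)) := by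
      rw [integral_const_mul]
      congr 1
      rw [show (fun y => Real.exp (f y) + (ψ y - c) * Real.exp (f y))
          = fun y => Real.exp (f y) + (ψ y * Real.exp (f y) - c * Real.exp (f y)) from
        funext (fun y => by ring)]
      have hsub : Integrable (fun y => ψ y * Real.exp (f y) - c * Real.exp (f y)) μ := by
        refine (hintψef.sub (hbase.const_mul c)).congr
          (Filter.Eventually.of_forall fun y => ?_)
        simp only [Pi.sub_apply]
      rw [integral_add hbase hsub,
        integral_sub hintψef (hbase.const_mul c), integral_const_mul]
    rw [hexp] at this
    have hcZ : c * Z = ∫ y, ψ y * Real.exp (f y) ∂μ := by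
      rw [hc]; field_simp
    rw [hcZ] at this
    simpa using this
  have := Real.log_le_log (by positivity) hint
  rwa [Real.log_mul (Real.exp_pos _).ne' hZpos.ne', Real.log_exp, add_comm] at this

/-- Lower bound for the tilted expectation: if `ε * Z ≤ exp (f y)` pointwise then
`(∫ h e^f)/Z ≤ b - ε (b - ∫ h)`. -/
lemma tilted_exp_le (μ : Measure E) [IsProbabilityMeasure μ] {f h : E → ℝ}
    (hfm : Measurable f) (hhm : Measurable h) {Cf Ch b : ℝ}
    (hCf : ∀ y, |f y| ≤ Cf) (hCh : ∀ y, |h y| ≤ Ch) (hb : ∀ y, h y ≤ b)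
    {ε : ℝ} (hε0 : 0 ≤ ε)
    (hεZ : ∀ y, ε * (∫ z, Real.exp (f z) ∂μ) ≤ Real.exp (f y)) :
    (∫ y, h y * Real.exp (f y) ∂μ) / (∫ y, Real.exp (f y) ∂μ)
      ≤ b - ε * (b - ∫ y, h y ∂μ) := by
  set Z := ∫ y, Real.exp (f y) ∂μ with hZ
  have hZpos : 0 < Z := lt_of_lt_of_le (Real.exp_pos _) (exp_int_pos μ hfm hCf)
  have hef : ∀ y, |Real.exp (f y)| ≤ Real.exp Cf := abs_exp_le hCf
  have hbase : Integrable (fun y => Real.exp (f y)) μ := bddIntegrable μ hfm.exp hef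
  have hinth : Integrable h μ := bddIntegrable μ hhm hCh
  have hinthef : Integrable (fun y => h y * Real.exp (f y)) μ :=
    bddIntegrable μ (hhm.mul hfm.exp) (C := Ch * Real.exp Cf) (fun y => by
      rw [abs_mul]
      exact mul_le_mul (hCh y) (hef y) (abs_nonneg _) (le_trans (abs_nonneg _) (hCh y)))
  have hpt : ∀ y, ε * Z * (b - h y) ≤ (b - h y) * Real.exp (f y) := by
    intro y
    rw [mul_comm (ε * Z) _]
    exact mul_le_mul_of_nonneg_left (hεZ y) (by linarith [hb y])
  have hlhs : Integrable (fun y => ε * Z * (b - h y)) μ :=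
    (((integrable_const b).sub hinth).const_mul _)
  have hrhs : Integrable (fun y => (b - h y) * Real.exp (f y)) μ := by
    refine ((hbase.const_mul b).sub hinthef).congr
      (Filter.Eventually.of_forall fun y => ?_)
    simp only [Pi.sub_apply]; ring
  have := integral_mono hlhs hrhs hpt
  have e1 : ∫ y, ε * Z * (b - h y) ∂μ = ε * Z * (b - ∫ y, h y ∂μ) := by
    rw [integral_const_mul, integral_sub (integrable_const b) hinth]
    simp
  have e2 : ∫ y, (b - h y) * Real.exp (f y) ∂μ = b * Z - ∫ y, h y * Real.exp (f y) ∂μ := by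
    rw [show (fun y => (b - h y) * Real.exp (f y))
        = fun y => b * Real.exp (f y) - h y * Real.exp (f y) from funext fun y => by ring]
    rw [integral_sub (hbase.const_mul b) hinthef, integral_const_mul]
  rw [e1, e2] at this
  rw [div_le_iff₀ hZpos]
  nlinarith

end MpeAux

open MpeAux

/-- Under the mixing condition (A.1), the MPE operator is a local contraction in the span
seminorm: for every `M > 0` there is `α ∈ (0,1)`, depending only on `P` and `M` (not on the
bounded measurable reward `g`), such that `‖Tf₁ - Tf₂‖_sp ≤ α ‖f₁ - f₂‖_sp` whenever
`‖f₁‖_sp ≤ M` and `‖f₂‖_sp ≤ M`. -/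
theorem mpe_local_contraction {E : Type*} [MeasurableSpace E]
    (P : Kernel E E) [IsMarkovKernel P]
    (Λ : ℝ) (hΛ : Λ ∈ Set.Ioo (0 : ℝ) 1)
    (hmix : ∀ B : Set E, MeasurableSet B → ∀ x x' : E,
      |(P x B).toReal - (P x' B).toReal| ≤ Λ) :
    ∀ M : ℝ, 0 < M → ∃ α : ℝ, α ∈ Set.Ioo (0 : ℝ) 1 ∧
      ∀ g : E → ℝ, Measurable g → (∃ Cg : ℝ, ∀ x, |g x| ≤ Cg) →
      ∀ f₁ f₂ : E → ℝ, Measurable f₁ → Measurable f₂ →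
        (∃ C₁ : ℝ, ∀ x, |f₁ x| ≤ C₁) → (∃ C₂ : ℝ, ∀ x, |f₂ x| ≤ C₂) →
        spanSeminorm f₁ ≤ M → spanSeminorm f₂ ≤ M →
        spanSeminorm (fun x => mpeOp P g f₁ x - mpeOp P g f₂ x)
          ≤ α * spanSeminorm (fun x => f₁ x - f₂ x) := by
  intro M hM
  obtain ⟨hΛ0, hΛ1⟩ := hΛ
  set ε : ℝ := Real.exp (-(2*M)) with hεdef
  have hε0 : 0 < ε := Real.exp_pos _
  have hε1 : ε < 1 := Real.exp_lt_one_iff.2 (by linarith)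
  set α : ℝ := 1 - ε * (1 - Λ) with hαdef
  have hα0 : 0 < α := by nlinarith
  have hα1 : α < 1 := by nlinarith
  refine ⟨α, ⟨hα0, hα1⟩, ?_⟩
  rintro g hg ⟨Cg, hCg⟩ f₁ f₂ hm₁ hm₂ ⟨C₁, hC₁⟩ ⟨C₂, hC₂⟩ hs₁ hs₂
  rcases isEmpty_or_nonempty E with hE | hE
  · simp only [spanSeminorm, Real.iSup_of_isEmpty, Real.iInf_of_isEmpty]
    norm_num
  -- reduce to the difference of log-integrals
  set D : E → ℝ := fun x => Real.log (∫ y, Real.exp (f₁ y) ∂(P x))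
      - Real.log (∫ y, Real.exp (f₂ y) ∂(P x)) with hD
  have hfun : (fun x => mpeOp P g f₁ x - mpeOp P g f₂ x) = D := by
    funext x; simp only [mpeOp, hD]; ring
  rw [hfun]
  set h : E → ℝ := fun y => f₁ y - f₂ y with hh
  have hhm : Measurable h := hm₁.sub hm₂
  have hhb : ∀ y, |h y| ≤ C₁ + C₂ := fun y => by
    rw [hh]
    calc |f₁ y - f₂ y| ≤ |f₁ y| + |f₂ y| := abs_sub _ _
      _ ≤ C₁ + C₂ := add_le_add (hC₁ y) (hC₂ y)
  have hbddA : BddAbove (Set.range h) :=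
    ⟨C₁ + C₂, by rintro _ ⟨y, rfl⟩; exact le_of_abs_le (hhb y)⟩
  have hbddB : BddBelow (Set.range h) :=
    ⟨-(C₁ + C₂), by rintro _ ⟨y, rfl⟩; exact neg_le_of_abs_le (hhb y)⟩
  set a : ℝ := ⨅ y, h y with hadef
  set b : ℝ := ⨆ y, h y with hbdef
  have hah : ∀ y, a ≤ h y := fun y => ciInf_le hbddB y
  have hhb' : ∀ y, h y ≤ b := fun y => le_ciSup hbddA y
  have hab : a ≤ b := le_trans (hah (Classical.arbitrary E)) (hhb' _)
  -- ε Z bounds for f₁ and f₂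
  have hεZ : ∀ (f : E → ℝ), Measurable f → (∀ y, |f y| ≤ max C₁ C₂) → spanSeminorm f ≤ M →
      ∀ (x : E) (y : E), ε * (∫ z, Real.exp (f z) ∂(P x)) ≤ Real.exp (f y) := by
    intro f hf hC hs x y
    have hbA : BddAbove (Set.range f) :=
      ⟨max C₁ C₂, by rintro _ ⟨z, rfl⟩; exact le_of_abs_le (hC z)⟩
    have hbB : BddBelow (Set.range f) :=
      ⟨-(max C₁ C₂), by rintro _ ⟨z, rfl⟩; exact neg_le_of_abs_le (hC z)⟩
    have h1 : ∀ z, f z ≤ ⨆ w, f w := fun z => le_ciSup hbA z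
    have h2 : ∀ z, (⨅ w, f w) ≤ f z := fun z => ciInf_le hbB z
    have hZle : (∫ z, Real.exp (f z) ∂(P x)) ≤ Real.exp (⨆ w, f w) := by
      calc (∫ z, Real.exp (f z) ∂(P x)) ≤ ∫ _, Real.exp (⨆ w, f w) ∂(P x) :=
            integral_mono (bddIntegrable _ hf.exp (abs_exp_le hC)) (integrable_const _)
              (fun z => Real.exp_le_exp.2 (h1 z))
        _ = Real.exp (⨆ w, f w) := by simp
    have hspan2 : (⨆ w, f w) - (⨅ w, f w) ≤ 2 * M := by
      have : ((⨆ w, f w) - ⨅ w, f w) / 2 ≤ M := hs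
      linarith
    calc ε * (∫ z, Real.exp (f z) ∂(P x)) ≤ ε * Real.exp (⨆ w, f w) :=
          mul_le_mul_of_nonneg_left hZle hε0.le
      _ = Real.exp ((⨆ w, f w) - 2*M) := by rw [hεdef, ← Real.exp_add]; ring_nf
      _ ≤ Real.exp (⨅ w, f w) := Real.exp_le_exp.2 (by linarith)
      _ ≤ Real.exp (f y) := Real.exp_le_exp.2 (h2 y)
  have hC₁' : ∀ y, |f₁ y| ≤ max C₁ C₂ := fun y => le_trans (hC₁ y) (le_max_left _ _)
  have hC₂' : ∀ y, |f₂ y| ≤ max C₁ C₂ := fun y => le_trans (hC₂ y) (le_max_right _ _)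
  -- Jensen bounds
  have jensen1 : ∀ x : E, D x ≤ (∫ y, h y * Real.exp (f₁ y) ∂(P x))
      / (∫ y, Real.exp (f₁ y) ∂(P x)) := by
    intro x
    have := log_int_exp_grad (P x) hm₁ (hm₂.sub hm₁) hC₁
      (Cψ := C₁ + C₂) (fun y => by
        calc |f₂ y - f₁ y| ≤ |f₂ y| + |f₁ y| := abs_sub _ _
          _ ≤ C₁ + C₂ := by linarith [hC₁ y, hC₂ y])
    simp only [Pi.sub_apply, show ∀ y : E, f₁ y + (f₂ y - f₁ y) = f₂ y from fun y => by ring] at this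
    have e2 : ∫ y, (f₂ y - f₁ y) * Real.exp (f₁ y) ∂(P x)
        = -∫ y, h y * Real.exp (f₁ y) ∂(P x) := by
      rw [← integral_neg]
      congr 1; funext y; simp only [hh]; ring
    rw [e2, neg_div] at this
    simp only [hD]
    linarith
  have jensen2 : ∀ x : E, (∫ y, h y * Real.exp (f₂ y) ∂(P x))
      / (∫ y, Real.exp (f₂ y) ∂(P x)) ≤ D x := by
    intro x
    have := log_int_exp_grad (P x) hm₂ (hm₁.sub hm₂) hC₂
      (Cψ := C₁ + C₂) (fun y => hhb y)
    simp only [Pi.sub_apply, show ∀ y : E, f₂ y + (f₁ y - f₂ y) = f₁ y from fun y => by ring] at this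
    have e2 : ∫ y, (f₁ y - f₂ y) * Real.exp (f₂ y) ∂(P x)
        = ∫ y, h y * Real.exp (f₂ y) ∂(P x) := rfl
    rw [e2] at this
    simp only [hD]
    linarith
  -- the key oscillation bound
  have key : ∀ x x' : E, D x - D x' ≤ α * (b - a) := by
    intro x x'
    have hJ1 : (∫ y, h y * Real.exp (f₁ y) ∂(P x)) / (∫ y, Real.exp (f₁ y) ∂(P x))
        ≤ b - ε * (b - ∫ y, h y ∂(P x)) :=
      tilted_exp_le (P x) hm₁ hhm hC₁ hhb hhb' hε0.le (hεZ f₁ hm₁ hC₁' hs₁ x)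
    -- mirror bound via -h
    have hJ2 : a + ε * ((∫ y, h y ∂(P x')) - a)
        ≤ (∫ y, h y * Real.exp (f₂ y) ∂(P x')) / (∫ y, Real.exp (f₂ y) ∂(P x')) := by
      have := tilted_exp_le (P x') hm₂ hhm.neg hC₂
        (Ch := C₁ + C₂) (fun y => by rw [Pi.neg_apply, abs_neg]; exact hhb y)
        (b := -a) (fun y => neg_le_neg (hah y)) hε0.le (hεZ f₂ hm₂ hC₂' hs₂ x')
      have e3 : ∫ y, -h y * Real.exp (f₂ y) ∂(P x')
          = -∫ y, h y * Real.exp (f₂ y) ∂(P x') := by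
        rw [← integral_neg]; congr 1; funext y; ring
      have e4 : ∫ y, -h y ∂(P x') = -∫ y, h y ∂(P x') :=
        integral_neg _
      simp only [Pi.neg_apply] at this
      rw [e3, e4, neg_div] at this
      linarith
    have htv : (∫ y, h y ∂(P x)) - ∫ y, h y ∂(P x') ≤ Λ * (b - a) :=
      tv_integral_diff (P x) (P x') hΛ0.le
        (fun B hB => le_of_abs_le (hmix B hB x x')) hhm hah hhb'
    have hA : D x ≤ b - ε * (b - ∫ y, h y ∂(P x)) := le_trans (jensen1 x) hJ1
    have hB : a + ε * ((∫ y, h y ∂(P x')) - a) ≤ D x' := le_trans hJ2 (jensen2 x')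
    have hCm : ε * ((∫ y, h y ∂(P x)) - ∫ y, h y ∂(P x')) ≤ ε * (Λ * (b - a)) :=
      mul_le_mul_of_nonneg_left htv hε0.le
    rw [hαdef]
    nlinarith [hA, hB, hCm]
  -- from the oscillation bound to the span bound
  have hZb : ∀ (f : E → ℝ), Measurable f → (∀ y, |f y| ≤ max C₁ C₂) →
      ∀ x : E, |Real.log (∫ y, Real.exp (f y) ∂(P x))| ≤ max C₁ C₂ := by
    intro f hf hC x
    have h1 : Real.exp (-(max C₁ C₂)) ≤ ∫ y, Real.exp (f y) ∂(P x) := exp_int_pos _ hf hC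
    have h2 : (∫ y, Real.exp (f y) ∂(P x)) ≤ Real.exp (max C₁ C₂) := by
      calc (∫ y, Real.exp (f y) ∂(P x)) ≤ ∫ _, Real.exp (max C₁ C₂) ∂(P x) :=
            integral_mono (bddIntegrable _ hf.exp (abs_exp_le hC)) (integrable_const _)
              (fun z => Real.exp_le_exp.2 (le_of_abs_le (hC z)))
        _ = Real.exp (max C₁ C₂) := by simp
    rw [abs_le]
    constructor
    · have := Real.log_le_log (Real.exp_pos _) h1
      rwa [Real.log_exp] at this
    · have := Real.log_le_log (lt_of_lt_of_le (Real.exp_pos _) h1) h2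
      rwa [Real.log_exp] at this
  have hDb : ∀ x, |D x| ≤ 2 * max C₁ C₂ := fun x => by
    rw [hD]
    calc |Real.log (∫ y, Real.exp (f₁ y) ∂(P x))
        - Real.log (∫ y, Real.exp (f₂ y) ∂(P x))|
        ≤ |Real.log (∫ y, Real.exp (f₁ y) ∂(P x))|
          + |Real.log (∫ y, Real.exp (f₂ y) ∂(P x))| := abs_sub _ _
      _ ≤ 2 * max C₁ C₂ := by
          linarith [hZb f₁ hm₁ hC₁' x, hZb f₂ hm₂ hC₂' x]
  have hDbA : BddAbove (Set.range D) :=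
    ⟨2 * max C₁ C₂, by rintro _ ⟨x, rfl⟩; exact le_of_abs_le (hDb x)⟩
  have hDbB : BddBelow (Set.range D) :=
    ⟨-(2 * max C₁ C₂), by rintro _ ⟨x, rfl⟩; exact neg_le_of_abs_le (hDb x)⟩
  have hsup : (⨆ x, D x) ≤ α * (b - a) + ⨅ x, D x := by
    refine ciSup_le fun x => ?_
    have h1 : ∀ x', D x - α * (b - a) ≤ D x' := fun x' => by linarith [key x x']
    have h2 : D x - α * (b - a) ≤ ⨅ x', D x' := le_ciInf h1
    linarith
  have hspanD : spanSeminorm D = ((⨆ x, D x) - ⨅ x, D x) / 2 := rfl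
  have hspanh : spanSeminorm (fun x => f₁ x - f₂ x) = (b - a) / 2 := rfl
  rw [hspanD, hspanh]
  have : ((⨆ x, D x) - ⨅ x, D x) ≤ α * (b - a) := by linarith
  rw [show α * ((b - a) / 2) = (α * (b - a)) / 2 by ring]
  exact div_le_div_of_nonneg_right this (by norm_num) |>.trans_eq rfl
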